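/- Let c^1,…,c^s ∈ ℤ^d be such that the map ζ ↦ ∑_{k=1}^s ζ_k c^k from {−1,0,1}^s to ℤ^d is injective. Then ∫_{[0,1]^d} ∏_{k=1}^s (1 + cos(2π⟨c^k,t⟩)) dt = 1, and consequently ∫_{[0,1]^d} | −1 + ∏_{k=1}^s (1 + cos(2π⟨c^k,t⟩)) | dt ≤ 2. -/

import Mathlib

open MeasureTheory Filter Real Topology


-- L1: one-dimensional
lemma int1 (m : ℤ) :
    (∫ x in Set.Icc (0:ℝ) 1, Complex.exp (2 * Real.pi * Complex.I * m * x)) =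
      if m = 0 then 1 else 0 := by
  rw [MeasureTheory.integral_Icc_eq_integral_Ioc,
    ← intervalIntegral.integral_of_le (by norm_num : (0:ℝ) ≤ 1)]
  rcases eq_or_ne m 0 with h | h
  · simp [h]
  · rw [if_neg h]
    have hc : (2 * Real.pi * Complex.I * m : ℂ) ≠ 0 := by
      simp [Real.pi_ne_zero, Complex.I_ne_zero, h]
    have := integral_exp_mul_complex (a := 0) (b := 1) hc
    rw [show ∀ x:ℝ, (2 * Real.pi * Complex.I * m : ℂ) * x
      = 2 * Real.pi * Complex.I * m * x from fun x => rfl] at this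
    rw [this]
    have h1 : Complex.exp (2 * Real.pi * Complex.I * m * (1:ℝ)) = 1 := by
      rw [Complex.ofReal_one, mul_one]
      rw [show (2 * Real.pi * Complex.I * m : ℂ) = m * (2 * Real.pi * Complex.I) by ring]
      exact_mod_cast Complex.exp_int_mul_two_pi_mul_I m
    have h0 : Complex.exp (2 * Real.pi * Complex.I * m * (0:ℝ)) = 1 := by
      simp
    rw [h1, h0, sub_self, zero_div]

lemma indicator_pi_prod {d : ℕ} (f : Fin d → ℝ → ℂ) (t : Fin d → ℝ) :
    (Set.Icc (0 : Fin d → ℝ) 1).indicator (fun t => ∏ i, f i (t i)) t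
      = ∏ i, (Set.Icc (0:ℝ) 1).indicator (f i) (t i) := by
  by_cases ht : t ∈ Set.Icc (0 : Fin d → ℝ) 1
  · rw [Set.indicator_of_mem ht]
    exact Finset.prod_congr rfl fun i _ =>
      (Set.indicator_of_mem (Set.mem_Icc.mpr ⟨ht.1 i, ht.2 i⟩) (f i)).symm
  · rw [Set.indicator_of_notMem ht]
    have : ∃ i, t i ∉ Set.Icc (0:ℝ) 1 := by
      by_contra h
      push_neg at h
      exact ht (Set.mem_Icc.mpr ⟨fun i => (Set.mem_Icc.mp (h i)).1, fun i => (Set.mem_Icc.mp (h i)).2⟩)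
    obtain ⟨i, hi⟩ := this
    exact (Finset.prod_eq_zero (Finset.mem_univ i) (by rw [Set.indicator_of_notMem hi])).symm

-- L2: d-dimensional
lemma intd (d : ℕ) (m : Fin d → ℤ) :
    (∫ t in Set.Icc (0 : Fin d → ℝ) 1,
        Complex.exp (2 * Real.pi * Complex.I * ∑ i, (m i : ℂ) * (t i : ℝ))) =
      if m = 0 then 1 else 0 := by
  have key : ∀ t : Fin d → ℝ,
      Complex.exp (2 * Real.pi * Complex.I * ∑ i, (m i : ℂ) * (t i : ℝ))
        = ∏ i, Complex.exp (2 * Real.pi * Complex.I * m i * (t i : ℝ)) := by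
    intro t
    rw [← Complex.exp_sum, Finset.mul_sum]
    congr 1
    refine Finset.sum_congr rfl fun i _ => by ring
  simp_rw [key]
  rw [← MeasureTheory.integral_indicator (by exact measurableSet_Icc)]
  simp_rw [indicator_pi_prod (fun i x => Complex.exp (2 * Real.pi * Complex.I * m i * (x:ℝ)))]
  rw [MeasureTheory.volume_pi, MeasureTheory.integral_fintype_prod_eq_prod
    (f := fun i x => (Set.Icc (0:ℝ) 1).indicator
      (fun y => Complex.exp (2 * Real.pi * Complex.I * m i * (y:ℝ))) x)]
  have : ∀ i, (∫ x : ℝ, (Set.Icc (0:ℝ) 1).indicator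
      (fun y => Complex.exp (2 * Real.pi * Complex.I * m i * (y:ℝ))) x)
      = if m i = 0 then 1 else 0 := by
    intro i
    rw [MeasureTheory.integral_indicator (by exact measurableSet_Icc)]
    exact int1 (m i)
  simp_rw [this]
  rcases eq_or_ne m 0 with h | h
  · simp [h, funext_iff.mp h]
  · rw [if_neg h]
    obtain ⟨i, hi⟩ : ∃ i, m i ≠ 0 := by
      by_contra hc; push_neg at hc; exact h (funext hc)
    exact Finset.prod_eq_zero (Finset.mem_univ i) (by rw [if_neg hi])

lemma hcos_expand (x : ℝ) :
    ((1 + Real.cos x : ℝ) : ℂ)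
      = ∑ z ∈ ({-1, 0, 1} : Finset ℤ),
          (if z = 0 then (1:ℂ) else 1/2) * Complex.exp (Complex.I * z * x) := by
  rw [show ({-1,0,1} : Finset ℤ) = insert (-1) (insert 0 {1}) from rfl,
    Finset.sum_insert (by decide), Finset.sum_insert (by decide), Finset.sum_singleton]
  simp only [if_neg (by decide : (-1:ℤ) ≠ 0), if_pos rfl, if_neg (by decide : (1:ℤ) ≠ 0)]
  push_cast
  rw [Complex.cos]
  rw [show (Complex.I * -1 * x : ℂ) = -(x:ℂ) * Complex.I by ring,
    show (Complex.I * 1 * x : ℂ) = (x:ℂ) * Complex.I by ring]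
  ring_nf
  rw [Complex.exp_zero]
  ring

lemma riesz_part1 (d s : ℕ) (c : Fin s → (Fin d → ℤ))
    (hinj : ∀ ζ ζ' : Fin s → ℤ,
      (∀ k, ζ k ∈ ({-1, 0, 1} : Set ℤ)) → (∀ k, ζ' k ∈ ({-1, 0, 1} : Set ℤ)) →
      (∑ k, ζ k • c k) = (∑ k, ζ' k • c k) → ζ = ζ') :
    (∫ t in Set.Icc (0 : Fin d → ℝ) 1,
        ∏ k : Fin s, (1 + Real.cos (2 * Real.pi * ∑ i, (c k i : ℝ) * t i))) = 1 := by
  have hpt : ∀ t : Fin d → ℝ,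
      ((∏ k : Fin s, (1 + Real.cos (2 * Real.pi * ∑ i, (c k i : ℝ) * t i)) : ℝ) : ℂ)
        = ∑ ζ ∈ Fintype.piFinset (fun _ : Fin s => ({-1, 0, 1} : Finset ℤ)),
            (∏ k, (if ζ k = 0 then (1:ℂ) else 1/2)) *
              Complex.exp (2 * Real.pi * Complex.I *
                ∑ i, (((∑ k, ζ k • c k) i : ℤ) : ℂ) * (t i : ℝ)) := by
    intro t
    rw [Complex.ofReal_prod]
    simp_rw [hcos_expand]
    rw [Finset.prod_univ_sum]
    refine Finset.sum_congr rfl fun ζ hζ => ?_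
    rw [Finset.prod_mul_distrib]
    congr 1
    rw [← Complex.exp_sum]
    congr 1
    calc ∑ k, Complex.I * (ζ k : ℂ) * ((2 * Real.pi * ∑ i, (c k i : ℝ) * t i : ℝ) : ℂ)
        = ∑ k, ∑ i, 2 * Real.pi * Complex.I * ((ζ k * c k i : ℤ) : ℂ) * (t i : ℝ) := by
          refine Finset.sum_congr rfl fun k _ => ?_
          push_cast
          simp_rw [Finset.mul_sum]
          exact Finset.sum_congr rfl fun i _ => by ring
      _ = 2 * Real.pi * Complex.I * ∑ i, (((∑ k, ζ k • c k) i : ℤ) : ℂ) * (t i : ℝ) := by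
          rw [Finset.sum_comm, Finset.mul_sum]
          refine Finset.sum_congr rfl fun i _ => ?_
          rw [show ((∑ k, ζ k • c k) i) = ∑ k, ζ k * c k i by
            rw [Finset.sum_apply]; exact Finset.sum_congr rfl fun k _ => rfl]
          push_cast
          rw [Finset.sum_mul, Finset.mul_sum]
          exact Finset.sum_congr rfl fun k _ => by ring
  have hcplx : (∫ t in Set.Icc (0 : Fin d → ℝ) 1,
      ((∏ k : Fin s, (1 + Real.cos (2 * Real.pi * ∑ i, (c k i : ℝ) * t i)) : ℝ) : ℂ)) = 1 := by
    simp_rw [hpt]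
    rw [MeasureTheory.integral_finset_sum]
    · have heach : ∀ ζ ∈ Fintype.piFinset (fun _ : Fin s => ({-1, 0, 1} : Finset ℤ)),
          (∫ t in Set.Icc (0 : Fin d → ℝ) 1,
            (∏ k, (if ζ k = 0 then (1:ℂ) else 1/2)) *
              Complex.exp (2 * Real.pi * Complex.I *
                ∑ i, (((∑ k, ζ k • c k) i : ℤ) : ℂ) * (t i : ℝ)))
          = (∏ k, (if ζ k = 0 then (1:ℂ) else 1/2)) *
              (if (∑ k, ζ k • c k) = 0 then 1 else 0) := by
        intro ζ _
        rw [MeasureTheory.integral_const_mul, intd d (∑ k, ζ k • c k)]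
      rw [Finset.sum_congr rfl heach]
      rw [Finset.sum_eq_single (fun _ => (0:ℤ))]
      · simp
      · intro ζ hζ hne
        rw [if_neg, mul_zero]
        intro hm
        apply hne
        refine hinj ζ (fun _ => 0) ?_ (fun k => by simp) ?_
        · intro k
          have := Fintype.mem_piFinset.mp hζ k
          simpa using this
        · rw [hm]
          simp
      · intro h0
        exact absurd (Fintype.mem_piFinset.mpr fun k => by simp) h0
    · intro ζ _
      apply Continuous.integrableOn_Icc
      fun_prop
  rw [← RCLike.ofReal_inj (K := ℂ), ← integral_ofReal]
  exact hcplx.trans (by norm_num)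

/-- If the map `ζ ↦ ∑_k ζ_k c^k` from `{−1,0,1}^s` to `ℤ^d` is injective, then the Riesz
product `∏_k (1 + cos(2π⟨c^k,t⟩))` has integral `1` over the unit cube, and consequently
`‖−1 + ∏_k (1 + cos(2π⟨c^k,t⟩))‖_{L¹([0,1]^d)} ≤ 2`. -/
theorem riesz_product_integral (d s : ℕ) (c : Fin s → (Fin d → ℤ))
    (hinj : ∀ ζ ζ' : Fin s → ℤ,
      (∀ k, ζ k ∈ ({-1, 0, 1} : Set ℤ)) → (∀ k, ζ' k ∈ ({-1, 0, 1} : Set ℤ)) →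
      (∑ k, ζ k • c k) = (∑ k, ζ' k • c k) → ζ = ζ') :
    (∫ t in Set.Icc (0 : Fin d → ℝ) 1,
        ∏ k : Fin s, (1 + Real.cos (2 * Real.pi * ∑ i, (c k i : ℝ) * t i))) = 1 ∧
    (∫ t in Set.Icc (0 : Fin d → ℝ) 1,
        |(-1 : ℝ) + ∏ k : Fin s,
          (1 + Real.cos (2 * Real.pi * ∑ i, (c k i : ℝ) * t i))|) ≤ 2 := by

  have h1 := riesz_part1 d s c hinj
  refine ⟨h1, ?_⟩
  set P : (Fin d → ℝ) → ℝ :=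
    fun t => ∏ k : Fin s, (1 + Real.cos (2 * Real.pi * ∑ i, (c k i : ℝ) * t i)) with hP
  have hPnn : ∀ t, 0 ≤ P t := fun t =>
    Finset.prod_nonneg fun k _ => by
      nlinarith [Real.neg_one_le_cos (2 * Real.pi * ∑ i, (c k i : ℝ) * t i)]
  have hPcont : Continuous P := by fun_prop
  have hPint : MeasureTheory.IntegrableOn P (Set.Icc (0 : Fin d → ℝ) 1) :=
    hPcont.integrableOn_Icc
  have habs : Continuous fun t => |(-1 : ℝ) + P t| := by fun_prop
  have hvol : volume (Set.Icc (0 : Fin d → ℝ) 1) = 1 := by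
    rw [Real.volume_Icc_pi]; simp
  have hconst : MeasureTheory.IntegrableOn (fun _ : Fin d → ℝ => (1:ℝ))
      (Set.Icc (0 : Fin d → ℝ) 1) :=
    (MeasureTheory.integrableOn_const_iff (C := (1:ℝ))).mpr (Or.inr (by rw [hvol]; exact ENNReal.one_lt_top))
  have h2 : (∫ t in Set.Icc (0 : Fin d → ℝ) 1, |(-1 : ℝ) + P t|)
      ≤ ∫ t in Set.Icc (0 : Fin d → ℝ) 1, ((1:ℝ) + P t) := by
    refine MeasureTheory.setIntegral_mono_on habs.integrableOn_Icc (hconst.add hPint)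
      measurableSet_Icc fun t _ => ?_
    rw [abs_le]
    constructor <;> nlinarith [hPnn t]
  refine h2.trans ?_
  rw [MeasureTheory.integral_add hconst hPint, h1, MeasureTheory.setIntegral_const, measureReal_def, hvol]
  norm_num
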